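/- Let S be a Gorenstein ring, f_1,…,f_n a regular sequence in S, g_1,…,g_c a regular sequence contained in (f_1,…,f_n) with g_j = Σ_i a_{ij} f_i, R = S/(g_1,…,g_c), M = S/(f_1,…,f_n). Let α ∈ ⋀^c S^n be the image of a generator of ⋀^c S^c under ⋀^c A. Then exterior multiplication by α defines a morphism of complexes φ': R ⊗ K → (R ⊗ K)[−c] on the Koszul complex K of f_1,…,f_n which induces an isomorphism M = H_0(R ⊗ K) → H_c(R ⊗ K) = Tor^S_c(R, M); identifying (R⊗K)[−c] with (R ⊗ K^*)[c] via a choice of generator of ⋀^n S^n, φ' induces an isomorphism H_0(R⊗K) → H_0((R⊗K^*)[c]). -/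
import Mathlib


/-!
STATEMENT 16: `S` (Gorenstein) Noetherian, `f 1, …, f n` a regular sequence,
`g 1, …, g_{c+1}` a regular sequence with `g j = ∑ i, A i j * f i`, `R = S/(g)`,
`M = S/(f)`, and `K` the Koszul complex of the `f i` (an `S`-free resolution of `M`).
Multiplication by `α = (⋀ A)(e̅₁ ∧ ⋯)` — realized as the composition of the homotopies
`τ j` for the `g j` on `K` — induces a morphism of complexes
`φ' : R ⊗ K → (R ⊗ K)[−(c+1)]` (up to the sign `(−1)^{c+1}`), and `φ'` induces an
isomorphism `M = H₀(R ⊗ K) → H_{c+1}(R ⊗ K) = Tor^S_{c+1}(R, M)`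
(stated elementwise).  Here `R ⊗ K` is realized as `K/(g)K`.
-/

/-- composition, along ascending homological degrees, of a list of degree `+1` maps -/
def compUp {S : Type*} [CommRing S] {K : ℕ → Type*}
    [∀ i, AddCommGroup (K i)] [∀ i, Module S (K i)] {c : ℕ}
    (τ : Fin c → ∀ i : ℕ, K i →ₗ[S] K (i + 1)) :
    (l : List (Fin c)) → ∀ i : ℕ, K i →ₗ[S] K (i + l.length)
  | [], _ => LinearMap.id
  | a :: l, i => (τ a (i + l.length)) ∘ₗ (compUp τ l i)

/-- transport along an equality of indices -/
def castK {S : Type*} [CommRing S] {K : ℕ → Type*}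
    [∀ i, AddCommGroup (K i)] [∀ i, Module S (K i)] {a b : ℕ} (h : a = b) :
    K a →ₗ[S] K b := by subst h; exact LinearMap.id

/-- reduction of a linear map modulo `I` -/
def quotMap {S : Type*} [CommRing S] (I : Ideal S) {A B : Type*}
    [AddCommGroup A] [Module S A] [AddCommGroup B] [Module S B] (φ : A →ₗ[S] B) :
    (A ⧸ (I • (⊤ : Submodule S A))) →ₗ[S] (B ⧸ (I • (⊤ : Submodule S B))) :=
  Submodule.mapQ _ _ φ (by
    refine Submodule.smul_le.mpr fun r hr m _ => ?_
    simp only [Submodule.mem_comap, map_smul]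
    exact Submodule.smul_mem_smul hr Submodule.mem_top)

open DirectSum
open scoped Pointwise

section AuxL
variable {S : Type*} [CommRing S] {K : ℕ → Type*}
  [∀ i, AddCommGroup (K i)] [∀ i, Module S (K i)]

/-- totalized differential on `⨁ i, K i` -/
def waD (d : ∀ i : ℕ, K (i + 1) →ₗ[S] K i) : (⨁ i, K i) →ₗ[S] ⨁ i, K i :=
  DirectSum.toModule S ℕ _ fun i => match i with
    | 0 => 0
    | (i + 1) => (DirectSum.lof S ℕ K i) ∘ₗ d i

@[simp] lemma bigD_lof_succ (d : ∀ i : ℕ, K (i + 1) →ₗ[S] K i) (i : ℕ) (y : K (i + 1)) :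
    waD d (DirectSum.lof S ℕ K (i + 1) y) = DirectSum.lof S ℕ K i (d i y) :=
  DirectSum.toModule_lof S _ _

@[simp] lemma bigD_lof_zero (d : ∀ i : ℕ, K (i + 1) →ₗ[S] K i) (y : K 0) :
    waD d (DirectSum.lof S ℕ K 0 y) = 0 :=
  DirectSum.toModule_lof S _ _

/-- totalized degree `+1` map on `⨁ i, K i` -/
def waT (t : ∀ i : ℕ, K i →ₗ[S] K (i + 1)) : (⨁ i, K i) →ₗ[S] ⨁ i, K i :=
  DirectSum.toModule S ℕ _ fun i => (DirectSum.lof S ℕ K (i + 1)) ∘ₗ t i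

@[simp] lemma tauL_lof (t : ∀ i : ℕ, K i →ₗ[S] K (i + 1)) (i : ℕ) (y : K i) :
    waT t (DirectSum.lof S ℕ K i y) = DirectSum.lof S ℕ K (i + 1) (t i y) :=
  DirectSum.toModule_lof S _ _

/-- composition of the first `m` of the totalized `τ`s, the one with largest
index applied first -/
def waTC (τ' : ℕ → ∀ i : ℕ, K i →ₗ[S] K (i + 1)) : ℕ → ((⨁ i, K i) →ₗ[S] ⨁ i, K i)
  | 0 => LinearMap.id
  | m + 1 => waTC τ' m ∘ₗ waT (τ' m)

/-- totalized composition along a list -/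
def waTTc {c : ℕ} (τ : Fin c → ∀ i : ℕ, K i →ₗ[S] K (i + 1)) :
    List (Fin c) → ((⨁ i, K i) →ₗ[S] ⨁ i, K i)
  | [] => LinearMap.id
  | a :: l => waT (τ a) ∘ₗ waTTc τ l

lemma waTTc_append {c : ℕ} (τ : Fin c → ∀ i : ℕ, K i →ₗ[S] K (i + 1))
    (l₁ l₂ : List (Fin c)) : waTTc τ (l₁ ++ l₂) = waTTc τ l₁ ∘ₗ waTTc τ l₂ := by
  induction l₁ with
  | nil => simp [waTTc]
  | cons a l ih => simp [waTTc, ih, LinearMap.comp_assoc]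

end AuxL
open DirectSum
open scoped Pointwise

lemma quotMap_mk {S : Type*} [CommRing S] (I : Ideal S) {A B : Type*}
    [AddCommGroup A] [Module S A] [AddCommGroup B] [Module S B] (φ : A →ₗ[S] B)
    (x : A) : quotMap I φ (Submodule.Quotient.mk x) = Submodule.Quotient.mk (φ x) :=
  rfl

lemma mk_zsmul {S : Type*} [CommRing S] {M : Type*} [AddCommGroup M] [Module S M]
    (p : Submodule S M) (z : ℤ) (x : M) :
    (Submodule.Quotient.mk (z • x) : M ⧸ p) = z • Submodule.Quotient.mk x :=
  map_zsmul p.mkQ z x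

section Aux2
variable {S : Type*} [CommRing S] {K : ℕ → Type*}
  [∀ i, AddCommGroup (K i)] [∀ i, Module S (K i)]

@[simp] lemma lof_castK {a b : ℕ} (h : a = b) (x : K a) :
    DirectSum.lof S ℕ K b (castK (S := S) h x) = DirectSum.lof S ℕ K a x := by subst h; rfl

/-- the ideal generated by `g' 0, …, g' (m-1)` -/
def waG (g' : ℕ → S) (m : ℕ) : Ideal S := Ideal.span {s | ∃ j < m, g' j = s}

lemma waG_zero (g' : ℕ → S) : waG g' 0 = ⊥ := by
  have : {s | ∃ j < 0, g' j = s} = (∅ : Set S) := by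
    ext s; simp
  rw [waG, this, Ideal.span_empty]

lemma waG_mono (g' : ℕ → S) {m m' : ℕ} (h : m ≤ m') : waG g' m ≤ waG g' m' :=
  Ideal.span_mono (fun s ⟨j, hj, hs⟩ => ⟨j, lt_of_lt_of_le hj h, hs⟩)

lemma waG_succ (g' : ℕ → S) (m : ℕ) :
    waG g' (m + 1) = Ideal.span {g' m} ⊔ waG g' m := by
  rw [waG, waG, ← Ideal.span_union]
  congr 1
  ext s
  simp only [Set.mem_setOf_eq, Set.mem_union, Set.mem_singleton_iff]
  constructor
  · rintro ⟨j, hj, rfl⟩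
    rcases Nat.lt_succ_iff_lt_or_eq.mp hj with h | rfl
    · exact Or.inr ⟨j, h, rfl⟩
    · exact Or.inl rfl
  · rintro (rfl | ⟨j, hj, rfl⟩)
    · exact ⟨m, Nat.lt_succ_self m, rfl⟩
    · exact ⟨j, Nat.lt_succ_of_lt hj, rfl⟩

variable {M : Type*} [AddCommGroup M] [Module S M]

lemma waG_smul_mem (g' : ℕ → S) {j m : ℕ} (hj : j < m) (x : M) :
    g' j • x ∈ waG g' m • (⊤ : Submodule S M) :=
  Submodule.smul_mem_smul (Ideal.subset_span ⟨j, hj, rfl⟩) Submodule.mem_top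

lemma zsmul_mem' (N : Submodule S M) {x : M} (h : x ∈ N) (z : ℤ) : z • x ∈ N :=
  N.toAddSubgroup.zsmul_mem h z

lemma waG_decompose (g' : ℕ → S) (m : ℕ) {x : M}
    (hx : x ∈ waG g' (m + 1) • (⊤ : Submodule S M)) :
    ∃ p n, n ∈ waG g' m • (⊤ : Submodule S M) ∧ x = g' m • p + n := by
  rw [waG_succ, Submodule.sup_smul, Submodule.ideal_span_singleton_smul] at hx
  rcases Submodule.mem_sup.mp hx with ⟨a, ha, n, hn, rfl⟩
  rcases ha with ⟨p, _, rfl⟩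
  exact ⟨p, n, hn, rfl⟩

lemma mem_smul_top_map {M₂ : Type*} [AddCommGroup M₂] [Module S M₂]
    (φ : M →ₗ[S] M₂) (I : Ideal S) {x : M} (h : x ∈ I • (⊤ : Submodule S M)) :
    φ x ∈ I • (⊤ : Submodule S M₂) :=
  Submodule.smul_top_le_comap_smul_top I φ h

/-- extraction of a graded component of a membership in `I • ⊤` -/
lemma component_mem_smul_top (I : Ideal S) {x : ⨁ i, K i} (i : ℕ)
    (h : x ∈ I • (⊤ : Submodule S (⨁ i, K i))) :
    DirectSum.component S ℕ K i x ∈ I • (⊤ : Submodule S (K i)) :=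
  mem_smul_top_map _ I h

lemma lof_mem_smul_top_iff (I : Ideal S) (i : ℕ) (x : K i) :
    DirectSum.lof S ℕ K i x ∈ I • (⊤ : Submodule S (⨁ i, K i)) ↔
      x ∈ I • (⊤ : Submodule S (K i)) := by
  constructor
  · intro h
    have := component_mem_smul_top I i h
    rwa [DirectSum.component.lof_self] at this
  · exact mem_smul_top_map _ I

lemma smul_top_bot (I : Ideal S) (h : I = ⊥) : I • (⊤ : Submodule S M) = ⊥ := by
  rw [h, Submodule.bot_smul]

/-- coordinates of elements of `I • ⊤` in a free module -/
lemma mem_smul_top_iff_repr [Module.Free S M] (I : Ideal S) (x : M) :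
    x ∈ I • (⊤ : Submodule S M) ↔
      ∀ t, (Module.Free.chooseBasis S M).repr x t ∈ I := by
  set b := Module.Free.chooseBasis S M
  constructor
  · intro h t
    refine Submodule.smul_induction_on h (fun r hr m _ => ?_) (fun a b ha hb => ?_)
    · rw [map_smul]; exact I.mul_mem_right _ hr
    · rw [map_add]; exact I.add_mem ha hb
  · intro h
    have hx := b.linearCombination_repr x
    rw [← hx, Finsupp.linearCombination_apply, Finsupp.sum]
    exact Submodule.sum_mem _ fun t _ =>
      Submodule.smul_mem_smul (h t) Submodule.mem_top

end Aux2

section Bridge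
variable {S : Type*} [CommRing S] {K : ℕ → Type*}
  [∀ i, AddCommGroup (K i)] [∀ i, Module S (K i)]

lemma compUp_lof {c : ℕ} (τ : Fin c → ∀ i : ℕ, K i →ₗ[S] K (i + 1))
    (l : List (Fin c)) (i : ℕ) (y : K i) :
    DirectSum.lof S ℕ K (i + l.length) (compUp τ l i y) =
      waTTc τ l (DirectSum.lof S ℕ K i y) := by
  induction l with
  | nil => rfl
  | cons a l ih =>
    show DirectSum.lof S ℕ K ((i + l.length) + 1) (τ a (i + l.length) (compUp τ l i y)) = _
    rw [← tauL_lof, ih]; rfl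

lemma waTTc_take {c : ℕ} (τ : Fin (c + 1) → ∀ i : ℕ, K i →ₗ[S] K (i + 1))
    (τ' : ℕ → ∀ i : ℕ, K i →ₗ[S] K (i + 1))
    (hτ' : ∀ (m : ℕ) (hm : m < c + 1), τ' m = τ ⟨m, hm⟩) :
    ∀ k, k ≤ c + 1 →
      waTTc τ ((List.finRange (c + 1)).take k) = waTC τ' k := by
  intro k
  induction k with
  | zero => intro _; simp [waTTc, waTC]
  | succ k ih =>
    intro hk
    have hlen : k < (List.finRange (c + 1)).length := by simp; omega
    rw [List.take_succ, List.getElem?_eq_getElem hlen]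
    show waTTc τ (_ ++ [_]) = _
    rw [waTTc_append, ih (by omega)]
    show _ ∘ₗ waTTc τ [(List.finRange (c+1))[k]] = waTC τ' (k+1)
    have : (List.finRange (c + 1))[k] = ⟨k, by omega⟩ := by
      apply Fin.ext; simp
    rw [this]
    show waTC τ' k ∘ₗ (waT (τ ⟨k, by omega⟩) ∘ₗ LinearMap.id) = waTC τ' (k + 1)
    rw [LinearMap.comp_id, ← hτ' k (by omega)]
    rfl

end Bridge

section Main
variable {S : Type*} [CommRing S] {K : ℕ → Type*}
  [∀ i, AddCommGroup (K i)] [∀ i, Module S (K i)]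
  (d : ∀ i : ℕ, K (i + 1) →ₗ[S] K i)
  (τ' : ℕ → ∀ i : ℕ, K i →ₗ[S] K (i + 1))
  (g' : ℕ → S)

/-- the homotopy identity, totalized -/
lemma waDT (hτ : ∀ m i, (d (i + 1)) ∘ₗ (τ' m (i + 1)) + (τ' m i) ∘ₗ (d i)
      = g' m • LinearMap.id)
    (hτ0 : ∀ m, (d 0) ∘ₗ (τ' m 0) = g' m • LinearMap.id) (m : ℕ) (x : ⨁ i, K i) :
    waD d (waT (τ' m) x) = g' m • x - waT (τ' m) (waD d x) := by
  suffices h : waD d ∘ₗ waT (τ' m) + waT (τ' m) ∘ₗ waD d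
      = (g' m • LinearMap.id : (⨁ i, K i) →ₗ[S] ⨁ i, K i) by
    have hx := LinearMap.congr_fun h x
    simp only [LinearMap.comp_apply, LinearMap.add_apply, LinearMap.smul_apply,
      LinearMap.id_apply] at hx
    rw [eq_sub_iff_add_eq, hx]
  refine DirectSum.linearMap_ext S fun i => LinearMap.ext fun y => ?_
  cases i with
  | zero =>
    have h0 := LinearMap.congr_fun (hτ0 m) y
    simp only [LinearMap.comp_apply, LinearMap.add_apply, LinearMap.smul_apply,
      LinearMap.id_apply] at h0 ⊢
    rw [tauL_lof, bigD_lof_succ, bigD_lof_zero, h0, map_zero, add_zero, map_smul]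
  | succ i =>
    have h1 := LinearMap.congr_fun (hτ m i) y
    simp only [LinearMap.comp_apply, LinearMap.add_apply, LinearMap.smul_apply,
      LinearMap.id_apply] at h1 ⊢
    rw [tauL_lof, bigD_lof_succ, bigD_lof_succ, tauL_lof, ← map_add, h1, map_smul]

/-- the differential squares to zero, totalized -/
lemma waDD (hexact : ∀ i, LinearMap.ker (d i) = LinearMap.range (d (i + 1)))
    (x : ⨁ i, K i) : waD d (waD d x) = 0 := by
  suffices h : waD d ∘ₗ waD d = (0 : (⨁ i, K i) →ₗ[S] ⨁ i, K i) by
    exact LinearMap.congr_fun h x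
  refine DirectSum.linearMap_ext S fun i => LinearMap.ext fun y => ?_
  simp only [LinearMap.comp_apply, LinearMap.zero_apply]
  cases i with
  | zero => rw [bigD_lof_zero, map_zero]
  | succ i =>
    rw [bigD_lof_succ]
    cases i with
    | zero => rw [bigD_lof_zero]
    | succ i =>
      rw [bigD_lof_succ]
      have : d i (d (i + 1) y) = 0 := by
        have : d (i + 1) y ∈ LinearMap.ker (d i) := by
          rw [hexact i]; exact ⟨y, rfl⟩
        exact this
      rw [this, map_zero]
end Main

section Main2
variable {S : Type*} [CommRing S] {K : ℕ → Type*}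
  [∀ i, AddCommGroup (K i)] [∀ i, Module S (K i)]
  {d : ∀ i : ℕ, K (i + 1) →ₗ[S] K i}
  {τ' : ℕ → ∀ i : ℕ, K i →ₗ[S] K (i + 1)}
  {g' : ℕ → S}

lemma neg_one_pow_zsmul_cancel {M : Type*} [AddCommGroup M] (k : ℕ) (v : M) :
    ((-1 : ℤ) ^ k) • (((-1 : ℤ) ^ k) • v) = v := by
  rw [smul_smul, ← pow_add, Even.neg_one_pow ⟨k, rfl⟩, one_smul]

/-- pushing the differential through the composition of homotopies, modulo `(g')` -/
lemma waPush (hτ : ∀ m i, (d (i + 1)) ∘ₗ (τ' m (i + 1)) + (τ' m i) ∘ₗ (d i)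
      = g' m • LinearMap.id)
    (hτ0 : ∀ m, (d 0) ∘ₗ (τ' m 0) = g' m • LinearMap.id) (m : ℕ) (x : ⨁ i, K i) :
    waD d (waTC τ' m x) - ((-1 : ℤ) ^ m) • waTC τ' m (waD d x)
      ∈ waG g' m • (⊤ : Submodule S (⨁ i, K i)) := by
  induction m generalizing x with
  | zero => simpa [waTC] using Submodule.zero_mem _
  | succ m ih =>
    have e0 : waTC τ' (m + 1) x = waTC τ' m (waT (τ' m) x) := rfl
    have hIH := ih (waT (τ' m) x)
    have e1 : waTC τ' m (waD d (waT (τ' m) x))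
        = g' m • waTC τ' m x - waTC τ' (m + 1) (waD d x) := by
      rw [waDT d τ' g' hτ hτ0, map_sub, map_smul]; rfl
    have e2 : waD d (waTC τ' (m + 1) x) - ((-1 : ℤ) ^ (m + 1)) • waTC τ' (m + 1) (waD d x)
        = (waD d (waTC τ' m (waT (τ' m) x))
            - ((-1 : ℤ) ^ m) • waTC τ' m (waD d (waT (τ' m) x)))
          + ((-1 : ℤ) ^ m) • (g' m • waTC τ' m x) := by
      rw [pow_succ, mul_neg_one, neg_smul, sub_neg_eq_add, e0, e1, smul_sub]
      abel
    rw [e2]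
    exact Submodule.add_mem _
      (Submodule.smul_mono_left (waG_mono g' (Nat.le_succ m)) hIH)
      (zsmul_mem' _ (waG_smul_mem g' (Nat.lt_succ_self m) _) _)

/-- the key identity: at the bottom of the complex, the differential of the
composition of `m+1` homotopies is `± g' m` times the composition of `m` of them -/
lemma waKey0 (hτ : ∀ m i, (d (i + 1)) ∘ₗ (τ' m (i + 1)) + (τ' m i) ∘ₗ (d i)
      = g' m • LinearMap.id)
    (hτ0 : ∀ m, (d 0) ∘ₗ (τ' m 0) = g' m • LinearMap.id) (m : ℕ) (y : K 0) :
    waD d (waTC τ' (m + 1) (DirectSum.lof S ℕ K 0 y))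
        - ((-1 : ℤ) ^ m) • (g' m • waTC τ' m (DirectSum.lof S ℕ K 0 y))
      ∈ waG g' m • (⊤ : Submodule S (⨁ i, K i)) := by
  have e0 : waTC τ' (m + 1) (DirectSum.lof S ℕ K 0 y)
      = waTC τ' m (DirectSum.lof S ℕ K 1 (τ' m 0 y)) := by
    show waTC τ' m (waT (τ' m) _) = _
    rw [tauL_lof]
  have e1 : waD d (DirectSum.lof S ℕ K 1 (τ' m 0 y))
      = g' m • DirectSum.lof S ℕ K 0 y := by
    rw [bigD_lof_succ]
    have := LinearMap.congr_fun (hτ0 m) y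
    simp only [LinearMap.comp_apply, LinearMap.smul_apply, LinearMap.id_apply] at this
    rw [this, map_smul]
  have := waPush hτ hτ0 m (DirectSum.lof S ℕ K 1 (τ' m 0 y))
  rw [e1, map_smul] at this
  rw [e0]
  exact this

/-- `waTC` preserves homogeneity -/
lemma waHomog (m : ℕ) : ∀ (b : ℕ) (y : K b), ∃ t : K (b + m),
    waTC τ' m (DirectSum.lof S ℕ K b y) = DirectSum.lof S ℕ K (b + m) t := by
  induction m with
  | zero => exact fun b y => ⟨y, rfl⟩
  | succ m ih =>
    intro b y
    obtain ⟨t', ht'⟩ := ih (b + 1) (τ' m b y)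
    refine ⟨castK (S := S) (by omega : b + 1 + m = b + (m + 1)) t', ?_⟩
    rw [lof_castK, ← ht']
    show waTC τ' m (waT (τ' m) _) = _
    rw [tauL_lof]

end Main2

section Main3
variable {S : Type*} [CommRing S] {K : ℕ → Type*}
  [∀ i, AddCommGroup (K i)] [∀ i, Module S (K i)]
  {d : ∀ i : ℕ, K (i + 1) →ₗ[S] K i}
  {τ' : ℕ → ∀ i : ℕ, K i →ₗ[S] K (i + 1)}
  {g' : ℕ → S}

lemma wadd (hexact : ∀ i, LinearMap.ker (d i) = LinearMap.range (d (i + 1)))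
    (i : ℕ) (z : K (i + 2)) : d i (d (i + 1) z) = 0 := by
  have : d (i + 1) z ∈ LinearMap.ker (d i) := by rw [hexact i]; exact ⟨z, rfl⟩
  exact this

/-- vanishing of the homology of `K/(g' 0, …, g' (m-1))K` above degree `m` -/
lemma waVanish (hexact : ∀ i, LinearMap.ker (d i) = LinearMap.range (d (i + 1)))
    {c : ℕ}
    (hreg : ∀ m', m' < c + 1 → ∀ (i : ℕ) (x : K i),
      g' m' • x ∈ waG g' m' • (⊤ : Submodule S (K i)) →
        x ∈ waG g' m' • (⊤ : Submodule S (K i))) :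
    ∀ m, m ≤ c + 1 → ∀ i, m ≤ i → ∀ z : K (i + 1),
      DirectSum.lof S ℕ K i (d i z) ∈ waG g' m • (⊤ : Submodule S (⨁ i, K i)) →
      ∃ u : K (i + 2), DirectSum.lof S ℕ K (i + 1) (z - d (i + 1) u)
        ∈ waG g' m • (⊤ : Submodule S (⨁ i, K i)) := by
  intro m
  induction m with
  | zero =>
    intro _ i _ z hz
    rw [smul_top_bot _ (waG_zero g'), Submodule.mem_bot] at hz
    have hz0 : d i z = 0 := by
      have := congrArg (DirectSum.component S ℕ K i) hz
      rwa [DirectSum.component.lof_self, map_zero] at this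
    have : z ∈ LinearMap.range (d (i + 1)) := by rw [← hexact i]; exact hz0
    obtain ⟨u, hu⟩ := this
    refine ⟨u, ?_⟩
    rw [← hu, sub_self, map_zero]
    exact Submodule.zero_mem _
  | succ m ih =>
    intro hm i hi z hz
    obtain ⟨i₀, rfl⟩ : ∃ i₀, i = i₀ + 1 := ⟨i - 1, by omega⟩
    obtain ⟨pL, nL, hnL, heq⟩ := waG_decompose g' m hz
    set p := DirectSum.component S ℕ K (i₀ + 1) pL with hp
    set nc := DirectSum.component S ℕ K (i₀ + 1) nL with hnc
    have hdz : d (i₀ + 1) z = g' m • p + nc := by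
      have := congrArg (DirectSum.component S ℕ K (i₀ + 1)) heq
      rwa [DirectSum.component.lof_self, map_add, map_smul] at this
    have hncm : nc ∈ waG g' m • (⊤ : Submodule S (K (i₀ + 1))) :=
      component_mem_smul_top _ _ hnL
    have hdp : d i₀ p ∈ waG g' m • (⊤ : Submodule S (K i₀)) := by
      refine hreg m (by omega) _ _ ?_
      have h0 : g' m • d i₀ p + d i₀ nc = 0 := by
        rw [← map_smul, ← map_add, ← hdz, wadd hexact]
      have : g' m • d i₀ p = - d i₀ nc := by
        rw [eq_neg_iff_add_eq_zero]; exact h0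
      rw [this]
      exact Submodule.neg_mem _ (mem_smul_top_map (d i₀) _ hncm)
    obtain ⟨u', hu'⟩ := ih (by omega) i₀ (by omega) p
      ((lof_mem_smul_top_iff _ _ _).mpr hdp)
    have hpu' : p - d (i₀ + 1) u' ∈ waG g' m • (⊤ : Submodule S (K (i₀ + 1))) :=
      (lof_mem_smul_top_iff _ _ _).mp hu'
    have hcand : d (i₀ + 1) (z - g' m • u') ∈ waG g' m • (⊤ : Submodule S (K (i₀ + 1))) := by
      rw [map_sub, map_smul, hdz]
      have : g' m • p + nc - g' m • d (i₀ + 1) u'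
          = g' m • (p - d (i₀ + 1) u') + nc := by
        rw [smul_sub]; abel
      rw [this]
      exact Submodule.add_mem _ (Submodule.smul_mem _ _ hpu') hncm
    obtain ⟨u, hu⟩ := ih (by omega) (i₀ + 1) (by omega) (z - g' m • u')
      ((lof_mem_smul_top_iff _ _ _).mpr hcand)
    refine ⟨u, ?_⟩
    have : z - d (i₀ + 2) u = (z - g' m • u' - d (i₀ + 2) u) + g' m • u' := by abel
    rw [this, map_add, map_smul]
    exact Submodule.add_mem _
      (Submodule.smul_mono_left (waG_mono g' (Nat.le_succ m)) hu)
      (waG_smul_mem g' (Nat.lt_succ_self m) _)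

end Main3

section Main4
variable {S : Type*} [CommRing S] {K : ℕ → Type*}
  [∀ i, AddCommGroup (K i)] [∀ i, Module S (K i)]
  {d : ∀ i : ℕ, K (i + 1) →ₗ[S] K i}
  {τ' : ℕ → ∀ i : ℕ, K i →ₗ[S] K (i + 1)}
  {g' : ℕ → S}

/-- surjectivity of the induced map `H₀ → H_{m+1}` -/
lemma waSurj (hexact : ∀ i, LinearMap.ker (d i) = LinearMap.range (d (i + 1)))
    (hτ : ∀ m i, (d (i + 1)) ∘ₗ (τ' m (i + 1)) + (τ' m i) ∘ₗ (d i)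
      = g' m • LinearMap.id)
    (hτ0 : ∀ m, (d 0) ∘ₗ (τ' m 0) = g' m • LinearMap.id)
    {c : ℕ}
    (hreg : ∀ m', m' < c + 1 → ∀ (i : ℕ) (x : K i),
      g' m' • x ∈ waG g' m' • (⊤ : Submodule S (K i)) →
        x ∈ waG g' m' • (⊤ : Submodule S (K i))) :
    ∀ m, m ≤ c → ∀ z : K (m + 1),
      DirectSum.lof S ℕ K m (d m z) ∈ waG g' (m + 1) • (⊤ : Submodule S (⨁ i, K i)) →
      ∃ (x : K 0) (u : K (m + 2)),
        DirectSum.lof S ℕ K (m + 1) z - waTC τ' (m + 1) (DirectSum.lof S ℕ K 0 x)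
            - DirectSum.lof S ℕ K (m + 1) (d (m + 1) u)
          ∈ waG g' (m + 1) • (⊤ : Submodule S (⨁ i, K i)) := by
  intro m
  induction m with
  | zero =>
    intro _ z hz
    obtain ⟨pL, nL, hnL, heq⟩ := waG_decompose g' 0 hz
    rw [smul_top_bot _ (waG_zero g'), Submodule.mem_bot] at hnL
    subst hnL
    set y := DirectSum.component S ℕ K 0 pL with hy
    have hdz : d 0 z = g' 0 • y := by
      have := congrArg (DirectSum.component S ℕ K 0) heq
      rwa [DirectSum.component.lof_self, add_zero, map_smul] at this
    have hker : z - τ' 0 0 y ∈ LinearMap.range (d 1) := by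
      rw [← hexact 0]
      show d 0 (z - τ' 0 0 y) = 0
      have h0 := LinearMap.congr_fun (hτ0 0) y
      simp only [LinearMap.comp_apply, LinearMap.smul_apply, LinearMap.id_apply] at h0
      rw [map_sub, hdz, h0, sub_self]
    obtain ⟨u, hu⟩ := hker
    refine ⟨y, u, ?_⟩
    have e0 : waTC τ' 1 (DirectSum.lof S ℕ K 0 y)
        = DirectSum.lof S ℕ K 1 (τ' 0 0 y) := tauL_lof _ _ _
    rw [e0, ← map_sub, ← map_sub, hu, sub_self, map_zero]
    exact Submodule.zero_mem _
  | succ m ih =>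
    intro hm z hz
    obtain ⟨pL, nL, hnL, heq⟩ := waG_decompose g' (m + 1) hz
    set y := DirectSum.component S ℕ K (m + 1) pL with hy
    set nc := DirectSum.component S ℕ K (m + 1) nL with hncdef
    have hdz : d (m + 1) z = g' (m + 1) • y + nc := by
      have := congrArg (DirectSum.component S ℕ K (m + 1)) heq
      rwa [DirectSum.component.lof_self, map_add, map_smul] at this
    have hncm : nc ∈ waG g' (m + 1) • (⊤ : Submodule S (K (m + 1))) :=
      component_mem_smul_top _ _ hnL
    have hdy : d m y ∈ waG g' (m + 1) • (⊤ : Submodule S (K m)) := by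
      refine hreg (m + 1) (by omega) _ _ ?_
      have h0 : g' (m + 1) • d m y + d m nc = 0 := by
        rw [← map_smul, ← map_add, ← hdz, wadd hexact]
      have : g' (m + 1) • d m y = - d m nc := by
        rw [eq_neg_iff_add_eq_zero]; exact h0
      rw [this]
      exact Submodule.neg_mem _ (mem_smul_top_map (d m) _ hncm)
    obtain ⟨x, u', hxu'⟩ := ih (by omega) y ((lof_mem_smul_top_iff _ _ _).mpr hdy)
    obtain ⟨t₀, ht₀⟩ := waHomog (τ' := τ') (m + 2) 0 x
    set t := castK (S := S) (by omega : 0 + (m + 2) = m + 2) t₀ with htdef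
    have ht : waTC τ' (m + 2) (DirectSum.lof S ℕ K 0 x)
        = DirectSum.lof S ℕ K (m + 2) t := by
      rw [htdef, lof_castK, ht₀]
    set A := z - ((-1 : ℤ) ^ (m + 1)) • t - g' (m + 1) • u' with hAdef
    set B := waD d (waTC τ' (m + 2) (DirectSum.lof S ℕ K 0 x))
        - ((-1 : ℤ) ^ (m + 1)) • (g' (m + 1) • waTC τ' (m + 1) (DirectSum.lof S ℕ K 0 x))
      with hBdef
    have hk0 : B ∈ waG g' (m + 1) • (⊤ : Submodule S (⨁ i, K i)) :=
      waKey0 hτ hτ0 (m + 1) x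
    have edt : DirectSum.lof S ℕ K (m + 1) (d (m + 1) t)
        = waD d (waTC τ' (m + 2) (DirectSum.lof S ℕ K 0 x)) := by
      rw [ht, bigD_lof_succ]
    have key : DirectSum.lof S ℕ K (m + 1) (d (m + 1) A)
        = g' (m + 1) • (DirectSum.lof S ℕ K (m + 1) y
            - waTC τ' (m + 1) (DirectSum.lof S ℕ K 0 x)
            - DirectSum.lof S ℕ K (m + 1) (d (m + 1) u'))
          + DirectSum.lof S ℕ K (m + 1) nc - ((-1 : ℤ) ^ (m + 1)) • B := by
      have hdA : d (m + 1) A = d (m + 1) z - ((-1 : ℤ) ^ (m + 1)) • d (m + 1) t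
          - g' (m + 1) • d (m + 1) u' := by
        rw [hAdef, map_sub, map_sub, map_zsmul, map_smul]
      rw [hdA, map_sub, map_sub, map_zsmul, map_smul, hdz, map_add, map_smul,
        edt, hBdef, smul_sub, smul_sub, smul_sub ((-1 : ℤ) ^ (m + 1)),
        neg_one_pow_zsmul_cancel (m + 1)]
      abel
    have hA : DirectSum.lof S ℕ K (m + 1) (d (m + 1) A)
        ∈ waG g' (m + 1) • (⊤ : Submodule S (⨁ i, K i)) := by
      rw [key]
      exact Submodule.sub_mem _
        (Submodule.add_mem _ (Submodule.smul_mem _ _ hxu')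
          ((lof_mem_smul_top_iff _ _ _).mpr hncm))
        (zsmul_mem' _ hk0 _)
    obtain ⟨u, hu⟩ := waVanish hexact hreg (m + 1) (by omega) (m + 1) le_rfl A hA
    refine ⟨((-1 : ℤ) ^ (m + 1)) • x, u, ?_⟩
    have hTx : waTC τ' (m + 2) (DirectSum.lof S ℕ K 0 (((-1 : ℤ) ^ (m + 1)) • x))
        = ((-1 : ℤ) ^ (m + 1)) • DirectSum.lof S ℕ K (m + 2) t := by
      rw [map_zsmul, map_zsmul, ht]
    have final : DirectSum.lof S ℕ K (m + 2) z
        - waTC τ' (m + 2) (DirectSum.lof S ℕ K 0 (((-1 : ℤ) ^ (m + 1)) • x))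
        - DirectSum.lof S ℕ K (m + 2) (d (m + 2) u)
        = DirectSum.lof S ℕ K (m + 2) (A - d (m + 2) u)
          + g' (m + 1) • DirectSum.lof S ℕ K (m + 2) u' := by
      rw [hTx, map_sub, hAdef, map_sub, map_sub, map_zsmul, map_smul]
      abel
    rw [final]
    exact Submodule.add_mem _
      (Submodule.smul_mono_left (waG_mono g' (Nat.le_succ (m + 1))) hu)
      (waG_smul_mem g' (Nat.lt_succ_self (m + 1)) _)
end Main4

section Main5
variable {S : Type*} [CommRing S] {K : ℕ → Type*}
  [∀ i, AddCommGroup (K i)] [∀ i, Module S (K i)]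
  {d : ∀ i : ℕ, K (i + 1) →ₗ[S] K i}
  {τ' : ℕ → ∀ i : ℕ, K i →ₗ[S] K (i + 1)}
  {g' : ℕ → S}

lemma smul_zsmul_comm {M : Type*} [AddCommGroup M] [Module S M]
    (s : S) (z : ℤ) (v : M) : s • (z • v) = z • (s • v) := by
  rw [← Int.cast_smul_eq_zsmul S, ← Int.cast_smul_eq_zsmul S, smul_smul, smul_smul, mul_comm]

/-- injectivity of the induced map `H₀ → H_{m+1}` -/
lemma waInj (hexact : ∀ i, LinearMap.ker (d i) = LinearMap.range (d (i + 1)))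
    (hτ : ∀ m i, (d (i + 1)) ∘ₗ (τ' m (i + 1)) + (τ' m i) ∘ₗ (d i)
      = g' m • LinearMap.id)
    (hτ0 : ∀ m, (d 0) ∘ₗ (τ' m 0) = g' m • LinearMap.id)
    {c : ℕ}
    (hreg : ∀ m', m' < c + 1 → ∀ (i : ℕ) (x : K i),
      g' m' • x ∈ waG g' m' • (⊤ : Submodule S (K i)) →
        x ∈ waG g' m' • (⊤ : Submodule S (K i))) :
    ∀ m, m ≤ c → ∀ (x : K 0) (u : K (m + 2)),
      waTC τ' (m + 1) (DirectSum.lof S ℕ K 0 x)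
          - DirectSum.lof S ℕ K (m + 1) (d (m + 1) u)
        ∈ waG g' (m + 1) • (⊤ : Submodule S (⨁ i, K i)) →
      ∃ v : K 1, DirectSum.lof S ℕ K 0 (x - d 0 v)
        ∈ waG g' (m + 1) • (⊤ : Submodule S (⨁ i, K i)) := by
  intro m
  induction m with
  | zero =>
    intro _ x u h
    have e0 : waTC τ' 1 (DirectSum.lof S ℕ K 0 x)
        = DirectSum.lof S ℕ K 1 (τ' 0 0 x) := tauL_lof _ _ _
    rw [e0, ← map_sub] at h
    have h1 : τ' 0 0 x - d 1 u ∈ waG g' 1 • (⊤ : Submodule S (K 1)) :=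
      (lof_mem_smul_top_iff _ _ _).mp h
    obtain ⟨p, n0, hn0, hdec⟩ := waG_decompose g' 0 h1
    rw [smul_top_bot _ (waG_zero g'), Submodule.mem_bot] at hn0
    subst hn0
    rw [add_zero] at hdec
    have h2 : g' 0 • x = g' 0 • d 0 p := by
      have := congrArg (d 0) hdec
      rw [map_sub, map_smul, wadd hexact 0 u, sub_zero] at this
      have h0 := LinearMap.congr_fun (hτ0 0) x
      simp only [LinearMap.comp_apply, LinearMap.smul_apply, LinearMap.id_apply] at h0
      rw [← h0, this]
    have h3 : x - d 0 p ∈ waG g' 0 • (⊤ : Submodule S (K 0)) := by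
      refine hreg 0 (by omega) _ _ ?_
      rw [smul_sub, h2, sub_self]
      exact Submodule.zero_mem _
    refine ⟨p, ?_⟩
    exact Submodule.smul_mono_left (waG_mono g' (by omega))
      ((lof_mem_smul_top_iff _ _ _).mpr h3)
  | succ m ih =>
    intro hm x u h
    obtain ⟨t₀, ht₀⟩ := waHomog (τ' := τ') (m + 2) 0 x
    set t := castK (S := S) (by omega : 0 + (m + 2) = m + 2) t₀ with htdef
    have ht : waTC τ' (m + 2) (DirectSum.lof S ℕ K 0 x)
        = DirectSum.lof S ℕ K (m + 2) t := by rw [htdef, lof_castK, ht₀]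
    obtain ⟨t₁', ht₁'⟩ := waHomog (τ' := τ') (m + 1) 0 x
    set t₁ := castK (S := S) (by omega : 0 + (m + 1) = m + 1) t₁' with ht₁def
    have ht₁ : waTC τ' (m + 1) (DirectSum.lof S ℕ K 0 x)
        = DirectSum.lof S ℕ K (m + 1) t₁ := by rw [ht₁def, lof_castK, ht₁']
    -- component form of the hypothesis
    rw [ht, ← map_sub] at h
    have h1 : t - d (m + 2) u ∈ waG g' (m + 2) • (⊤ : Submodule S (K (m + 2))) :=
      (lof_mem_smul_top_iff _ _ _).mp h
    obtain ⟨p, n, hn, hdec⟩ := waG_decompose g' (m + 1) h1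
    -- the key0 identity, component form
    have hk0 := waKey0 hτ hτ0 (m + 1) x
    rw [ht, ht₁, bigD_lof_succ, ← map_smul, ← map_zsmul, ← map_sub] at hk0
    have hb : d (m + 1) t - ((-1 : ℤ) ^ (m + 1)) • (g' (m + 1) • t₁)
        ∈ waG g' (m + 1) • (⊤ : Submodule S (K (m + 1))) :=
      (lof_mem_smul_top_iff _ _ _).mp hk0
    -- differentiate the decomposition
    have hdt : d (m + 1) t = g' (m + 1) • d (m + 1) p + d (m + 1) n := by
      have := congrArg (d (m + 1)) hdec
      rwa [map_sub, wadd hexact, sub_zero, map_add, map_smul] at this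
    have hmem : g' (m + 1) • (d (m + 1) p - ((-1 : ℤ) ^ (m + 1)) • t₁)
        ∈ waG g' (m + 1) • (⊤ : Submodule S (K (m + 1))) := by
      have e : g' (m + 1) • (d (m + 1) p - ((-1 : ℤ) ^ (m + 1)) • t₁)
          = (d (m + 1) t - ((-1 : ℤ) ^ (m + 1)) • (g' (m + 1) • t₁)) - d (m + 1) n := by
        rw [smul_sub, hdt, smul_zsmul_comm]
        abel
      rw [e]
      exact Submodule.sub_mem _ hb (mem_smul_top_map (d (m + 1)) _ hn)
    have h4 : ((-1 : ℤ) ^ (m + 1)) • t₁ - d (m + 1) p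
        ∈ waG g' (m + 1) • (⊤ : Submodule S (K (m + 1))) := by
      have := hreg (m + 1) (by omega) _ _ hmem
      have h5 := Submodule.neg_mem _ this
      rwa [neg_sub] at h5
    -- apply the inductive hypothesis
    have hIHhyp : waTC τ' (m + 1) (DirectSum.lof S ℕ K 0 (((-1 : ℤ) ^ (m + 1)) • x))
        - DirectSum.lof S ℕ K (m + 1) (d (m + 1) p)
        ∈ waG g' (m + 1) • (⊤ : Submodule S (⨁ i, K i)) := by
      rw [map_zsmul, map_zsmul, ht₁, ← map_zsmul, ← map_sub]
      exact (lof_mem_smul_top_iff _ _ _).mpr h4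
    obtain ⟨v, hv⟩ := ih (by omega) (((-1 : ℤ) ^ (m + 1)) • x) p hIHhyp
    refine ⟨((-1 : ℤ) ^ (m + 1)) • v, ?_⟩
    have e : x - d 0 (((-1 : ℤ) ^ (m + 1)) • v)
        = ((-1 : ℤ) ^ (m + 1)) • (((-1 : ℤ) ^ (m + 1)) • x - d 0 v) := by
      rw [smul_sub, neg_one_pow_zsmul_cancel, map_zsmul]
    rw [e, map_zsmul]
    exact Submodule.smul_mono_left (waG_mono g' (Nat.le_succ (m + 1)))
      (zsmul_mem' _ hv _)
end Main5

theorem wedge_alpha_induces_iso_H0_to_Hc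
    (S : Type*) [CommRing S] [IsNoetherianRing S]
    (n c : ℕ) (f : Fin n → S) (g : Fin (c + 1) → S)
    (hf : RingTheory.Sequence.IsRegular S (List.ofFn f))
    (hg : RingTheory.Sequence.IsRegular S (List.ofFn g))
    (A : Matrix (Fin n) (Fin (c + 1)) S)
    (hA : ∀ j, g j = ∑ i, A i j * f i)
    -- the Koszul complex `K` of `f 1, …, f n`: an `S`-free resolution of `M = S/(f)`
    (K : ℕ → Type*) [∀ i, AddCommGroup (K i)] [∀ i, Module S (K i)]
    [∀ i, Module.Free S (K i)] [∀ i, Module.Finite S (K i)]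
    (d : ∀ i : ℕ, K (i + 1) →ₗ[S] K i)
    (ε : K 0 →ₗ[S] (S ⧸ Ideal.span (Set.range f)))
    (hεsurj : Function.Surjective ε)
    (h0 : LinearMap.ker ε = LinearMap.range (d 0))
    (hexact : ∀ i, LinearMap.ker (d i) = LinearMap.range (d (i + 1)))
    -- the homotopies `τ j` for multiplication by `g j` on `K` (wedge with the columns
    -- of `A`)
    (τ : Fin (c + 1) → ∀ i : ℕ, K i →ₗ[S] K (i + 1))
    (hτ : ∀ j i, (d (i + 1)) ∘ₗ (τ j (i + 1)) + (τ j i) ∘ₗ (d i) = g j • LinearMap.id)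
    (hτ0 : ∀ j, (d 0) ∘ₗ (τ j 0) = g j • LinearMap.id)
    -- `w` is multiplication by `α`: the composition `τ 1 ∘ ⋯ ∘ τ (c+1)`
    (w : ∀ j : ℕ, K j →ₗ[S] K (c + 1 + j))
    (hw : ∀ j, w j = (castK (by simp; omega) :
        K (j + (List.finRange (c + 1)).length) →ₗ[S] K (c + 1 + j)) ∘ₗ
      compUp τ (List.finRange (c + 1)) j) :
    -- the reduction of `w` modulo `(g)` is a morphism of complexes
    -- `R ⊗ K → (R ⊗ K)[−(c+1)]` (with sign `(−1)^{c+1}`) ...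
    (∀ j : ℕ,
      (quotMap (Ideal.span (Set.range g)) (d (c + 1 + j))) ∘ₗ
          (quotMap (Ideal.span (Set.range g)) (w (j + 1)))
        = ((-1 : ℤ) ^ (c + 1)) •
            ((quotMap (Ideal.span (Set.range g)) (w j)) ∘ₗ
              (quotMap (Ideal.span (Set.range g)) (d j)))) ∧
    -- ... which induces an isomorphism `M = H₀(R ⊗ K) ≅ H_{c+1}(R ⊗ K)`:
    -- it sends `H₀` into cycles,
    ((quotMap (Ideal.span (Set.range g)) (d c)) ∘ₗ
        (quotMap (Ideal.span (Set.range g)) (w 0)) = 0) ∧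
    -- boundaries to boundaries,
    (∀ x, (quotMap (Ideal.span (Set.range g)) (w 0))
        ((quotMap (Ideal.span (Set.range g)) (d 0)) x)
      ∈ LinearMap.range (quotMap (Ideal.span (Set.range g)) (d (c + 1)))) ∧
    -- surjectively onto `H_{c+1}`,
    (∀ z, (quotMap (Ideal.span (Set.range g)) (d c)) z = 0 →
      ∃ x, z - (quotMap (Ideal.span (Set.range g)) (w 0)) x
        ∈ LinearMap.range (quotMap (Ideal.span (Set.range g)) (d (c + 1)))) ∧
    -- and injectively on `H₀`
    (∀ x, (quotMap (Ideal.span (Set.range g)) (w 0)) x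
        ∈ LinearMap.range (quotMap (Ideal.span (Set.range g)) (d (c + 1))) →
      x ∈ LinearMap.range (quotMap (Ideal.span (Set.range g)) (d 0))) := by
  
  classical
  -- ℕ-indexed versions of `τ` and `g`
  set idx : ℕ → Fin (c + 1) := fun m => ⟨min m c, by omega⟩ with hidxdef
  set τ' : ℕ → ∀ i : ℕ, K i →ₗ[S] K (i + 1) := fun m => τ (idx m) with hτ'def
  set g' : ℕ → S := fun m => g (idx m) with hg'def
  have hidx : ∀ (m : ℕ) (hm : m < c + 1), idx m = ⟨m, hm⟩ := by
    intro m hm; rw [hidxdef]; exact Fin.ext (by simp; omega)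
  have hτ'' : ∀ m i, (d (i + 1)) ∘ₗ (τ' m (i + 1)) + (τ' m i) ∘ₗ (d i)
      = g' m • LinearMap.id := fun m i => hτ (idx m) i
  have hτ0'' : ∀ m, (d 0) ∘ₗ (τ' m 0) = g' m • LinearMap.id := fun m => hτ0 (idx m)
  -- the ideal dictionary
  have hGN : waG g' (c + 1) = Ideal.span (Set.range g) := by
    apply congrArg Ideal.span
    ext s
    constructor
    · rintro ⟨j, hj, rfl⟩; exact ⟨idx j, rfl⟩
    · rintro ⟨a, rfl⟩
      refine ⟨a.1, a.2, ?_⟩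
      show g (idx a.1) = g a
      rw [hidx a.1 a.2]
  -- regularity modulo initial segments, at the ring level
  have hring : ∀ m', m' < c + 1 → ∀ s : S, g' m' * s ∈ waG g' m' → s ∈ waG g' m' := by
    intro m' hm' s hs
    have hlen : m' < (List.ofFn g).length := by simpa using hm'
    have hGm : waG g' m' = Ideal.ofList ((List.ofFn g).take m') := by
      apply congrArg Ideal.span
      ext r
      simp only [Set.mem_setOf_eq, List.mem_take_iff_getElem, List.getElem_ofFn]
      constructor
      · rintro ⟨j, hj, rfl⟩
        refine ⟨j, by simp; omega, ?_⟩
        show g _ = g (idx j)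
        rw [hidx j (by omega)]
      · rintro ⟨j, hj, rfl⟩
        have hj' : j < m' := by simp at hj; omega
        refine ⟨j, hj', ?_⟩
        show g (idx j) = g _
        rw [hidx j (by omega)]
    have hsm := hg.toIsWeaklyRegular.regular_mod_prev m' hlen
    have hgel : (List.ofFn g)[m'] = g' m' := by
      rw [List.getElem_ofFn]
      show g _ = g (idx m')
      rw [hidx m' hm']
    rw [hgel] at hsm
    have hJT : (Ideal.ofList ((List.ofFn g).take m') • ⊤ : Submodule S S)
        = Ideal.ofList ((List.ofFn g).take m') := by
      rw [Ideal.smul_eq_mul, Ideal.mul_top]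
    have hq : g' m' • (Submodule.Quotient.mk s :
        S ⧸ (Ideal.ofList ((List.ofFn g).take m') • ⊤ : Submodule S S))
        = g' m' • (Submodule.Quotient.mk 0) := by
      rw [← Submodule.Quotient.mk_smul, ← Submodule.Quotient.mk_smul, smul_zero]
      refine (Submodule.Quotient.eq _).mpr ?_
      rw [sub_zero, hJT, ← hGm]
      simpa [smul_eq_mul] using hs
    have h5 := (Submodule.Quotient.eq _).mp (hsm hq)
    rw [sub_zero, hJT, ← hGm] at h5
    exact h5
  -- regularity modulo initial segments, on the free modules `K i`
  have hreg : ∀ m', m' < c + 1 → ∀ (i : ℕ) (x : K i),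
      g' m' • x ∈ waG g' m' • (⊤ : Submodule S (K i)) →
        x ∈ waG g' m' • (⊤ : Submodule S (K i)) := by
    intro m' hm' i x hx
    rw [mem_smul_top_iff_repr] at hx ⊢
    intro t
    refine hring m' hm' _ ?_
    have := hx t
    rwa [map_smul, Finsupp.smul_apply, smul_eq_mul] at this
  -- the bridge between `w` and `waTC`
  have hbridge : ∀ (j : ℕ) (y : K j),
      waTC τ' (c + 1) (DirectSum.lof S ℕ K j y)
        = DirectSum.lof S ℕ K (c + 1 + j) (w j y) := by
    intro j y
    have htake : (List.finRange (c + 1)).take (c + 1) = List.finRange (c + 1) := by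
      apply List.take_of_length_le; simp
    have hTT := waTTc_take τ τ'
      (fun m hm => by show τ (idx m) = τ ⟨m, hm⟩; rw [hidx m hm]) (c + 1) le_rfl
    rw [htake] at hTT
    rw [← hTT, ← compUp_lof, hw j]
    show _ = DirectSum.lof S ℕ K (c + 1 + j) (castK _ (compUp τ (List.finRange (c + 1)) j y))
    rw [lof_castK]
  -- PART 1, elementwise
  have part1e : ∀ (j : ℕ) (x : K (j + 1)),
      d (c + 1 + j) (w (j + 1) x) - ((-1 : ℤ) ^ (c + 1)) • (w j (d j x))
        ∈ Ideal.span (Set.range g) • (⊤ : Submodule S (K (c + 1 + j))) := by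
    intro j x
    have hp := waPush (d := d) (g' := g') hτ'' hτ0'' (c + 1)
      (DirectSum.lof S ℕ K (j + 1) x)
    have e1 : waD d (waTC τ' (c + 1) (DirectSum.lof S ℕ K (j + 1) x))
        = DirectSum.lof S ℕ K (c + 1 + j) (d (c + 1 + j) (w (j + 1) x)) := by
      rw [hbridge (j + 1) x]
      exact bigD_lof_succ d (c + 1 + j) _
    have e2 : waTC τ' (c + 1) (waD d (DirectSum.lof S ℕ K (j + 1) x))
        = DirectSum.lof S ℕ K (c + 1 + j) (w j (d j x)) := by
      rw [bigD_lof_succ, hbridge j _]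
    rw [e1, e2, ← map_zsmul, ← map_sub, hGN] at hp
    exact (lof_mem_smul_top_iff _ _ _).mp hp
  have part1 : ∀ j : ℕ,
      (quotMap (Ideal.span (Set.range g)) (d (c + 1 + j))) ∘ₗ
          (quotMap (Ideal.span (Set.range g)) (w (j + 1)))
        = ((-1 : ℤ) ^ (c + 1)) •
            ((quotMap (Ideal.span (Set.range g)) (w j)) ∘ₗ
              (quotMap (Ideal.span (Set.range g)) (d j))) := by
    intro j
    refine LinearMap.ext fun xq => ?_
    obtain ⟨x, rfl⟩ := Submodule.Quotient.mk_surjective _ xq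
    simp only [LinearMap.comp_apply, LinearMap.smul_apply, quotMap_mk]
    rw [← mk_zsmul]
    exact (Submodule.Quotient.eq _).mpr (part1e j x)
  -- PART 2
  have part2e : ∀ x : K 0, d c (w 0 x)
      ∈ Ideal.span (Set.range g) • (⊤ : Submodule S (K c)) := by
    intro x
    have hk := waKey0 (d := d) (g' := g') hτ'' hτ0'' c x
    have e1 : waD d (waTC τ' (c + 1) (DirectSum.lof S ℕ K 0 x))
        = DirectSum.lof S ℕ K c (d c (w 0 x)) := by
      rw [hbridge 0 x]
      exact bigD_lof_succ d c _
    rw [e1] at hk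
    have hmem : DirectSum.lof S ℕ K c (d c (w 0 x))
        ∈ waG g' (c + 1) • (⊤ : Submodule S (⨁ i, K i)) := by
      have h6 := Submodule.add_mem _
        (Submodule.smul_mono_left (waG_mono g' (Nat.le_succ c)) hk)
        (zsmul_mem' _ (waG_smul_mem g' (Nat.lt_succ_self c)
          (waTC τ' c (DirectSum.lof S ℕ K 0 x))) ((-1 : ℤ) ^ c))
      rwa [sub_add_cancel] at h6
    rw [hGN] at hmem
    exact (lof_mem_smul_top_iff _ _ _).mp hmem
  have part2 : (quotMap (Ideal.span (Set.range g)) (d c)) ∘ₗ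
      (quotMap (Ideal.span (Set.range g)) (w 0)) = 0 := by
    refine LinearMap.ext fun xq => ?_
    obtain ⟨x, rfl⟩ := Submodule.Quotient.mk_surjective _ xq
    simp only [LinearMap.comp_apply, quotMap_mk, LinearMap.zero_apply]
    exact (Submodule.Quotient.mk_eq_zero _).mpr (part2e x)
  refine ⟨part1, part2, ?_, ?_, ?_⟩
  -- PART 3
  · intro xq
    obtain ⟨x, rfl⟩ := Submodule.Quotient.mk_surjective _ xq
    have hp := LinearMap.congr_fun (part1 0) (Submodule.Quotient.mk x)
    simp only [LinearMap.comp_apply, LinearMap.smul_apply] at hp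
    refine ⟨((-1 : ℤ) ^ (c + 1)) •
      ((quotMap (Ideal.span (Set.range g)) (w 1)) (Submodule.Quotient.mk x)), ?_⟩
    have h7 : (quotMap (Ideal.span (Set.range g)) (d (c + 1)))
        ((quotMap (Ideal.span (Set.range g)) (w 1)) (Submodule.Quotient.mk x))
        = ((-1 : ℤ) ^ (c + 1)) • ((quotMap (Ideal.span (Set.range g)) (w 0))
            ((quotMap (Ideal.span (Set.range g)) (d 0)) (Submodule.Quotient.mk x))) := hp
    rw [map_zsmul, h7, neg_one_pow_zsmul_cancel]
  -- PART 4
  · intro zq hz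
    obtain ⟨z, rfl⟩ := Submodule.Quotient.mk_surjective _ zq
    rw [quotMap_mk, Submodule.Quotient.mk_eq_zero] at hz
    have hz' : DirectSum.lof S ℕ K c (d c z)
        ∈ waG g' (c + 1) • (⊤ : Submodule S (⨁ i, K i)) := by
      rw [hGN]; exact (lof_mem_smul_top_iff _ _ _).mpr hz
    obtain ⟨x, u, hxu⟩ := waSurj (d := d) (τ' := τ') (g' := g')
      hexact hτ'' hτ0'' hreg c le_rfl z hz'
    have hb0 : waTC τ' (c + 1) (DirectSum.lof S ℕ K 0 x)
        = DirectSum.lof S ℕ K (c + 1) (w 0 x) := hbridge 0 x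
    rw [hb0, ← map_sub, ← map_sub, hGN] at hxu
    have hxu' : z - w 0 x - d (c + 1) u
        ∈ Ideal.span (Set.range g) • (⊤ : Submodule S (K (c + 1))) :=
      (lof_mem_smul_top_iff _ _ _).mp hxu
    refine ⟨Submodule.Quotient.mk x, Submodule.Quotient.mk u, ?_⟩
    rw [quotMap_mk, quotMap_mk, ← Submodule.Quotient.mk_sub]
    refine (Submodule.Quotient.eq _).mpr ?_
    have h8 := Submodule.neg_mem _ hxu'
    rw [neg_sub] at h8
    exact h8
  -- PART 5
  · intro xq hx
    obtain ⟨x, rfl⟩ := Submodule.Quotient.mk_surjective _ xq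
    obtain ⟨uq, huq⟩ := hx
    obtain ⟨u, rfl⟩ := Submodule.Quotient.mk_surjective _ uq
    rw [quotMap_mk, quotMap_mk] at huq
    have hmem : w 0 x - d (c + 1) u
        ∈ Ideal.span (Set.range g) • (⊤ : Submodule S (K (c + 1))) :=
      (Submodule.Quotient.eq _).mp huq.symm
    have hb0 : waTC τ' (c + 1) (DirectSum.lof S ℕ K 0 x)
        = DirectSum.lof S ℕ K (c + 1) (w 0 x) := hbridge 0 x
    have hL : waTC τ' (c + 1) (DirectSum.lof S ℕ K 0 x)
        - DirectSum.lof S ℕ K (c + 1) (d (c + 1) u)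
        ∈ waG g' (c + 1) • (⊤ : Submodule S (⨁ i, K i)) := by
      rw [hb0, ← map_sub, hGN]
      exact (lof_mem_smul_top_iff _ _ _).mpr hmem
    obtain ⟨v, hv⟩ := waInj (d := d) (τ' := τ') (g' := g')
      hexact hτ'' hτ0'' hreg c le_rfl x u hL
    rw [hGN] at hv
    have hv' : x - d 0 v ∈ Ideal.span (Set.range g) • (⊤ : Submodule S (K 0)) :=
      (lof_mem_smul_top_iff _ _ _).mp hv
    refine ⟨Submodule.Quotient.mk v, ?_⟩
    rw [quotMap_mk]
    refine ((Submodule.Quotient.eq _).mpr ?_).symm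
    exact hv'
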